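/- Let G be a finite graph with exactly one cut-point p, and suppose G \ {p} has exactly two components U and V, each of which is connected. Then K = U ∪ {p} and M = V ∪ {p} are subcontinua of G with no cut-points (i.e., tangles), so G is the junction of two tangles. -/

import Mathlib

open TopologicalSpace Set

/-- A finite graph: a space which is a finite union of arcs, any two of which meet
in a finite set. -/
def IsFiniteGraph (G : Type*) [TopologicalSpace G] : Prop :=
  ∃ 𝒜 : Finset (Set G),
    (⋃ A ∈ 𝒜, A) = Set.univ ∧
    (∀ A ∈ 𝒜, Nonempty (unitInterval ≃ₜ A)) ∧
    (∀ A ∈ 𝒜, ∀ B ∈ 𝒜, A ≠ B → (A ∩ B).Finite)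

/-- A tangle: a finite graph without cut-points. -/
def IsTangle (G : Type*) [TopologicalSpace G] : Prop :=
  IsFiniteGraph G ∧ ∀ p : G, IsPreconnected ({p}ᶜ : Set G)


/-- Homeomorphism between a compact space and a set, given a continuous injection with that
set as range. -/
lemma nonempty_homeo_of_range {X Y : Type*} [TopologicalSpace X] [TopologicalSpace Y]
    [CompactSpace X] [T2Space Y] {f : X → Y} (hc : Continuous f) (hi : Function.Injective f)
    {S : Set Y} (hr : Set.range f = S) : Nonempty (X ≃ₜ ↥S) := by
  subst hr
  exact ⟨(hc.isClosedEmbedding hi).toIsEmbedding.toHomeomorph⟩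

/-- A generic homeomorphism between a preimage in a subtype and the intersection. -/
def homeoInter {X : Type*} [TopologicalSpace X] (K A : Set X) :
    ↥(Subtype.val ⁻¹' A : Set ↥K) ≃ₜ ↥(A ∩ K) where
  toFun x := ⟨x.1.1, x.2, x.1.2⟩
  invFun y := ⟨⟨y.1, y.2.2⟩, y.2.1⟩
  left_inv _ := rfl
  right_inv _ := rfl
  continuous_toFun := Continuous.subtype_mk (continuous_subtype_val.comp continuous_subtype_val) _
  continuous_invFun := Continuous.subtype_mk (Continuous.subtype_mk continuous_subtype_val _) _

/-- Classification of closed subsets of `[0,1]` which are open at every point except possibly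
`t`. -/
lemma classify_real {T : Set ℝ} (hsub : T ⊆ Icc 0 1) (hTc : IsClosed T) {t : ℝ}
    (ht : t ∈ Icc (0:ℝ) 1)
    (hop : ∀ x ∈ T, x ≠ t → ∃ o : Set ℝ, IsOpen o ∧ x ∈ o ∧ o ∩ Icc 0 1 ⊆ T) :
    T ⊆ {t} ∨ Nonempty (↥(Icc (0:ℝ) 1) ≃ₜ ↥T) := by
  classical
  set u : Set ℝ := ⋃₀ {o | IsOpen o ∧ o ∩ Icc 0 1 ⊆ T} with hu_def
  have hu : IsOpen u := isOpen_sUnion fun o ho => ho.1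
  have huT : u ∩ Icc 0 1 ⊆ T := by rintro x ⟨⟨o, ho, hxo⟩, hxI⟩; exact ho.2 ⟨hxo, hxI⟩
  have hTu : ∀ x ∈ T, x ≠ t → x ∈ u := by
    intro x hx hxt
    obtain ⟨o, ho, hxo, hoT⟩ := hop x hx hxt
    exact ⟨o, ⟨ho, hoT⟩, hxo⟩
  have hleft : (∃ s ∈ T, s < t) → Icc 0 t ⊆ T := by
    rintro ⟨s, hsT, hst⟩
    have hs0 : 0 ≤ s := (hsub hsT).1
    have h0t : 0 < t := lt_of_le_of_lt hs0 hst
    have hIco : Ico (0:ℝ) t ⊆ T := by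
      by_contra hcon
      obtain ⟨x, hx0, hxt, hxT⟩ : ∃ x, 0 ≤ x ∧ x < t ∧ x ∉ T := by
        simpa [Set.subset_def] using hcon
      have hxI : x ∈ Ico (0:ℝ) t := ⟨hx0, hxt⟩
      obtain ⟨y, hyI, hyu, hyT⟩ := isPreconnected_Ico u Tᶜ hu hTc.isOpen_compl
        (fun z hz => by
          by_cases hzT : z ∈ T
          · exact Or.inl (hTu z hzT hz.2.ne)
          · exact Or.inr hzT)
        ⟨s, ⟨hs0, hst⟩, hTu s hsT hst.ne⟩ ⟨x, hxI, hxT⟩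
      exact hyT (huT ⟨hyu, hyI.1, hyI.2.le.trans ht.2⟩)
    have htT : t ∈ T := by
      have h1 : t ∈ closure (Ico (0:ℝ) t) := by
        rw [closure_Ico h0t.ne]
        exact ⟨h0t.le, le_refl t⟩
      have := closure_mono hIco h1
      rwa [hTc.closure_eq] at this
    intro x hx
    rcases lt_or_eq_of_le hx.2 with h | h
    · exact hIco ⟨hx.1, h⟩
    · exact h ▸ htT
  have hright : (∃ s ∈ T, t < s) → Icc t 1 ⊆ T := by
    rintro ⟨s, hsT, hst⟩
    have hs1 : s ≤ 1 := (hsub hsT).2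
    have ht1 : t < 1 := lt_of_lt_of_le hst hs1
    have hIoc : Ioc t (1:ℝ) ⊆ T := by
      by_contra hcon
      obtain ⟨x, hx0, hxt, hxT⟩ : ∃ x, t < x ∧ x ≤ 1 ∧ x ∉ T := by
        simpa [Set.subset_def] using hcon
      have hxI : x ∈ Ioc t (1:ℝ) := ⟨hx0, hxt⟩
      obtain ⟨y, hyI, hyu, hyT⟩ := isPreconnected_Ioc u Tᶜ hu hTc.isOpen_compl
        (fun z hz => by
          by_cases hzT : z ∈ T
          · exact Or.inl (hTu z hzT hz.1.ne')
          · exact Or.inr hzT)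
        ⟨s, ⟨hst, hs1⟩, hTu s hsT hst.ne'⟩ ⟨x, hxI, hxT⟩
      exact hyT (huT ⟨hyu, ht.1.trans hyI.1.le, hyI.2⟩)
    have htT : t ∈ T := by
      have h1 : t ∈ closure (Ioc t (1:ℝ)) := by
        rw [closure_Ioc ht1.ne]
        exact ⟨le_refl t, ht1.le⟩
      have := closure_mono hIoc h1
      rwa [hTc.closure_eq] at this
    intro x hx
    rcases lt_or_eq_of_le hx.1 with h | h
    · exact hIoc ⟨h, hx.2⟩
    · exact h ▸ htT
  by_cases hL : ∃ s ∈ T, s < t <;> by_cases hR : ∃ s ∈ T, t < s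
  · right
    have hTeq : T = Icc 0 1 := by
      refine subset_antisymm hsub (fun x hx => ?_)
      rcases le_or_gt x t with h | h
      · exact hleft hL ⟨hx.1, h⟩
      · exact hright hR ⟨h.le, hx.2⟩
    rw [hTeq]
    exact ⟨Homeomorph.refl _⟩
  · right
    obtain ⟨s, hsT, hst⟩ := hL
    have h0t : 0 < t := lt_of_le_of_lt (hsub hsT).1 hst
    have hTeq : T = Icc 0 t := by
      refine subset_antisymm (fun x hx => ⟨(hsub hx).1, ?_⟩) (hleft ⟨s, hsT, hst⟩)
      by_contra h
      exact hR ⟨x, hx, lt_of_not_ge h⟩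
    rw [hTeq]
    exact ⟨(iccHomeoI 0 t h0t).symm⟩
  · right
    obtain ⟨s, hsT, hst⟩ := hR
    have ht1 : t < 1 := lt_of_lt_of_le hst (hsub hsT).2
    have hTeq : T = Icc t 1 := by
      refine subset_antisymm (fun x hx => ⟨?_, (hsub hx).2⟩) (hright ⟨s, hsT, hst⟩)
      by_contra h
      exact hL ⟨x, hx, lt_of_not_ge h⟩
    rw [hTeq]
    exact ⟨(iccHomeoI t 1 ht1).symm⟩
  · left
    intro x hx
    by_contra hxt
    rcases lt_or_gt_of_ne hxt with h | h
    · exact hL ⟨x, hx, h⟩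
    · exact hR ⟨x, hx, h⟩
lemma arc_piece {G : Type*} [TopologicalSpace G] [T2Space G] {K : Set G} (hK : IsClosed K)
    {p : G} (hfr : ∀ x ∈ K, x ≠ p → x ∈ interior K) {A : Set G}
    (hA : Nonempty (unitInterval ≃ₜ ↥A)) :
    (A ∩ K ⊆ {p}) ∨ Nonempty (unitInterval ≃ₜ ↥(A ∩ K)) := by
  classical
  obtain ⟨e⟩ := hA
  set φ : unitInterval → G := fun x => (e x : G) with hφ
  have hφc : Continuous φ := continuous_subtype_val.comp e.continuous
  have hφinj : Function.Injective φ := fun a b hab => e.injective (Subtype.ext hab)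
  have hφA : ∀ x, φ x ∈ A := fun x => (e x).2
  set T : Set ℝ := {x : ℝ | ∃ h : x ∈ unitInterval, φ ⟨x, h⟩ ∈ K} with hT
  have hTsub : T ⊆ Icc 0 1 := by rintro x ⟨h, _⟩; exact h
  have hTc : IsClosed T := by
    have hTeq : T = Subtype.val '' (φ ⁻¹' K) := by
      ext x
      constructor
      · rintro ⟨h, hk⟩; exact ⟨⟨x, h⟩, hk, rfl⟩
      · rintro ⟨⟨y, h⟩, hk, rfl⟩; exact ⟨h, hk⟩
    rw [hTeq]
    exact (((hK.preimage hφc).isCompact).image continuous_subtype_val).isClosed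
  have hmemK : ∀ (x : ℝ) (h : x ∈ unitInterval), x ∈ T ↔ φ ⟨x, h⟩ ∈ K := by
    intro x h
    exact ⟨fun hx => hx.2, fun hk => ⟨h, hk⟩⟩
  have coord_mem : ∀ (a : G) (ha : a ∈ A), a ∈ K → (↑(e.symm ⟨a, ha⟩) : ℝ) ∈ T := by
    intro a ha hk
    refine ⟨(e.symm ⟨a, ha⟩).2, ?_⟩
    show (e (e.symm ⟨a, ha⟩) : G) ∈ K
    rw [Homeomorph.apply_symm_apply]
    exact hk
  have coord_eq : ∀ (a : G) (ha : a ∈ A), φ ⟨(↑(e.symm ⟨a, ha⟩) : ℝ), (e.symm ⟨a, ha⟩).2⟩ = a := by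
    intro a ha
    show (e (e.symm ⟨a, ha⟩) : G) = a
    rw [Homeomorph.apply_symm_apply]
  have hnbhd : ∀ (x : unitInterval), φ x ∈ interior K →
      ∃ o : Set ℝ, IsOpen o ∧ (x : ℝ) ∈ o ∧ o ∩ Icc 0 1 ⊆ T := by
    intro x hx
    have hopen : IsOpen (φ ⁻¹' interior K) := isOpen_interior.preimage hφc
    obtain ⟨o, ho, heq⟩ := isOpen_induced_iff.mp hopen
    refine ⟨o, ho, ?_, ?_⟩
    · have : x ∈ Subtype.val ⁻¹' o := by rw [heq]; exact hx
      exact this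
    · rintro z ⟨hzo, hzI⟩
      have : (⟨z, hzI⟩ : unitInterval) ∈ Subtype.val ⁻¹' o := hzo
      rw [heq] at this
      exact ⟨hzI, interior_subset this⟩
  by_cases hTe : T = ∅
  · left
    rintro a ⟨haA, haK⟩
    exact absurd (coord_mem a haA haK) (by simp [hTe])
  · obtain ⟨s0, hs0⟩ := Set.nonempty_iff_ne_empty.mpr hTe
    set t : ℝ := if hp : p ∈ A then (↑(e.symm ⟨p, hp⟩) : ℝ) else s0 with ht_def
    have ht : t ∈ Icc (0:ℝ) 1 := by
      rw [ht_def]; split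
      · exact (e.symm _).2
      · exact hTsub hs0
    have hop : ∀ x ∈ T, x ≠ t → ∃ o : Set ℝ, IsOpen o ∧ x ∈ o ∧ o ∩ Icc 0 1 ⊆ T := by
      rintro x ⟨hx, hk⟩ hxt
      have hne : φ ⟨x, hx⟩ ≠ p := by
        intro hP
        by_cases hp : p ∈ A
        · apply hxt
          rw [ht_def, dif_pos hp]
          have he : e ⟨x, hx⟩ = ⟨p, hp⟩ := Subtype.ext hP
          rw [← he, Homeomorph.symm_apply_apply]
        · exact hp (hP ▸ hφA ⟨x, hx⟩)
      exact hnbhd ⟨x, hx⟩ (hfr _ hk hne)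
    rcases classify_real hTsub hTc ht hop with hsing | h1
    · -- T ⊆ {t}
      have hs0t : s0 = t := hsing hs0
      have htT : t ∈ T := hs0t ▸ hs0
      obtain ⟨htI, hq⟩ := htT
      by_cases hqp : φ ⟨t, htI⟩ = p
      · left
        rintro a ⟨haA, haK⟩
        have hc := hsing (coord_mem a haA haK)
        have hc' : (↑(e.symm ⟨a, haA⟩) : ℝ) = t := hc
        have : φ ⟨(↑(e.symm ⟨a, haA⟩) : ℝ), (e.symm ⟨a, haA⟩).2⟩ = φ ⟨t, htI⟩ := by
          congr 1
          exact Subtype.ext hc'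
        rw [coord_eq a haA] at this
        rw [this, hqp]
        rfl
      · exfalso
        obtain ⟨o, ho, hto, hoT⟩ := hnbhd ⟨t, htI⟩ (hfr _ hq hqp)
        obtain ⟨ε, hε, hball⟩ := Metric.isOpen_iff.mp ho t hto
        set a := max 0 (t - ε/2) with ha_def
        set b := min 1 (t + ε/2) with hb_def
        have hat : a ≤ t := max_le htI.1 (by linarith)
        have htb : t ≤ b := le_min htI.2 (by linarith)
        have hab : a < b := by
          rcases lt_or_eq_of_le (hat.trans htb) with h | h
          · exact h
          · exfalso
            have h1 : a = t := by linarith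
            have h2 : t = b := by linarith
            have ht0 : t ≤ 0 := by
              by_contra hc
              push_neg at hc
              have : a = t - ε/2 ∨ a = 0 := by
                rcases max_choice 0 (t - ε/2) with h | h
                · exact Or.inr (by rw [ha_def, h])
                · exact Or.inl (by rw [ha_def, h])
              rcases this with h' | h'
              · linarith [h1 ▸ h']
              · linarith [h' ▸ h1]
            have ht1 : 1 ≤ t := by
              by_contra hc
              push_neg at hc
              have : b = t + ε/2 ∨ b = 1 := by
                rcases min_choice 1 (t + ε/2) with h | h
                · exact Or.inr (by rw [hb_def, h])
                · exact Or.inl (by rw [hb_def, h])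
              rcases this with h' | h'
              · linarith [h2 ▸ h']
              · linarith [h' ▸ h2]
            linarith
        have hIccT : Icc a b ⊆ T := by
          intro z hz
          apply hoT
          constructor
          · apply hball
            rw [Metric.mem_ball, Real.dist_eq, abs_lt]
            have h1 : t - ε/2 ≤ a := le_max_right _ _
            have h2 : b ≤ t + ε/2 := min_le_right _ _
            constructor <;> [linarith [hz.1]; linarith [hz.2]]
          · exact ⟨le_trans (le_max_left _ _) hz.1, le_trans hz.2 (min_le_left _ _)⟩
        exact ((Set.Icc_infinite hab).mono (hIccT.trans hsing)) (Set.finite_singleton t)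
    · right
      have hcomp : IsCompact T := isCompact_Icc.of_isClosed_subset hTc hTsub
      haveI : CompactSpace ↥T := isCompact_iff_compactSpace.mp hcomp
      have hψ : Nonempty (↥T ≃ₜ ↥(A ∩ K)) := by
        refine nonempty_homeo_of_range (f := fun x : ↥T => φ ⟨x.1, hTsub x.2⟩) ?_ ?_ ?_
        · exact hφc.comp (Continuous.subtype_mk continuous_subtype_val _)
        · intro x y hxy
          have h2 := hφinj hxy
          have h3 : (x.1 : ℝ) = y.1 := Subtype.mk_eq_mk.mp h2
          exact Subtype.ext h3
        · ext g
          constructor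
          · rintro ⟨x, rfl⟩
            obtain ⟨h, hk⟩ := x.2
            exact ⟨hφA _, hk⟩
          · rintro ⟨hgA, hgK⟩
            refine ⟨⟨(↑(e.symm ⟨g, hgA⟩) : ℝ), coord_mem g hgA hgK⟩, ?_⟩
            exact coord_eq g hgA
      exact ⟨h1.some.trans hψ.some⟩

lemma tangle_half {G : Type*} [MetricSpace G] [CompactSpace G] [ConnectedSpace G]
    (hfg : IsFiniteGraph G) (p : G)
    (huniq : ∀ q : G, ¬ IsPreconnected (({q}ᶜ : Set G)) → q = p)
    (U V : Set G) (hUV : U ∪ V = {p}ᶜ) (hdisj : Disjoint U V)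
    (hUo : IsOpen U) (hVo : IsOpen V)
    (hUc : IsConnected U) (hVc : IsConnected V) :
    IsClosed (U ∪ {p}) ∧ IsConnected (U ∪ {p}) ∧ IsTangle (U ∪ {p} : Set G) := by
  classical
  set K : Set G := U ∪ {p} with hK_def
  have hpU : p ∉ U := by
    intro h
    have : p ∈ ({p}ᶜ : Set G) := hUV ▸ Or.inl h
    exact this rfl
  have hpV : p ∉ V := by
    intro h
    have : p ∈ ({p}ᶜ : Set G) := hUV ▸ Or.inr h
    exact this rfl
  have hKc_eq : Kᶜ = V := by
    ext x
    constructor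
    · intro hx
      have hxp : x ≠ p := fun h => hx (Or.inr h)
      have hx1 : x ∈ U ∪ V := hUV ▸ hxp
      rcases hx1 with h | h
      · exact absurd (Or.inl h) hx
      · exact h
    · intro hxV hxK
      rcases hxK with h | h
      · exact hdisj.ne_of_mem h hxV rfl
      · exact hpV (h ▸ hxV)
  have hKcl : IsClosed K := by
    rw [← isOpen_compl_iff, hKc_eq]
    exact hVo
  have hUK : U ⊆ K := subset_union_left
  have hpK : p ∈ K := Or.inr rfl
  have hclU : closure U = K := by
    have h1 : closure U ⊆ K := hKcl.closure_subset_iff.mpr hUK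
    have hpcl : p ∈ closure U := by
      by_contra hp
      have hUcl : closure U ⊆ U := by
        intro x hx
        rcases h1 hx with h | h
        · exact h
        · exact absurd (h ▸ hx) hp
      have hclopen : IsClopen U := ⟨isClosed_of_closure_subset hUcl, hUo⟩
      rcases isClopen_iff.mp hclopen with h | h
      · exact hUc.nonempty.ne_empty h
      · exact hpU (h ▸ mem_univ p)
    refine subset_antisymm h1 (fun x hx => ?_)
    rcases hx with h | h
    · exact subset_closure h
    · exact h ▸ hpcl
  have hKconn : IsConnected K := hclU ▸ hUc.closure
  have hfr : ∀ x ∈ K, x ≠ p → x ∈ interior K := by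
    intro x hx hxp
    have hxU : x ∈ U := by
      rcases hx with h | h
      · exact h
      · exact absurd h hxp
    exact interior_maximal hUK hUo hxU
  -- decompose the finite graph structure
  obtain ⟨𝒜, hcov, harc, hfin⟩ := hfg
  have harcs : ∀ A ∈ 𝒜, (A ∩ K ⊆ {p}) ∨ Nonempty (unitInterval ≃ₜ ↥(A ∩ K)) :=
    fun A hA => arc_piece hKcl hfr (harc A hA)
  have hmemcov : ∀ x : G, ∃ A ∈ 𝒜, x ∈ A := by
    intro x
    have : x ∈ ⋃ A ∈ 𝒜, A := hcov ▸ mem_univ x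
    simpa using this
  -- the special arc through p
  have hA0 : ∃ A0 ∈ 𝒜, p ∈ A0 ∧ ¬ (A0 ∩ K ⊆ {p}) := by
    have hU_eq : (⋃ A ∈ 𝒜, A ∩ U) = U := by
      ext x
      simp only [Set.mem_iUnion, Set.mem_inter_iff, exists_prop]
      constructor
      · rintro ⟨A, _, _, hxU⟩; exact hxU
      · intro hxU
        obtain ⟨A, hA, hxA⟩ := hmemcov x
        exact ⟨A, hA, hxA, hxU⟩
    have hp1 : p ∈ ⋃ A ∈ 𝒜, closure (A ∩ U) := by
      rw [← Finset.closure_biUnion, hU_eq, hclU]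
      exact hpK
    simp only [Set.mem_iUnion, exists_prop] at hp1
    obtain ⟨A0, hA0m, hpA0⟩ := hp1
    obtain ⟨e0⟩ := harc A0 hA0m
    haveI : CompactSpace ↥A0 := e0.compactSpace
    have hA0cl : IsClosed A0 := (isCompact_iff_compactSpace.mpr ‹_›).isClosed
    have hpA0' : p ∈ A0 := by
      have := closure_mono (Set.inter_subset_left : A0 ∩ U ⊆ A0) hpA0
      rwa [hA0cl.closure_eq] at this
    have hne : (A0 ∩ U).Nonempty := by
      rw [← closure_nonempty_iff]
      exact ⟨p, hpA0⟩
    obtain ⟨u0, hu0A, hu0U⟩ := hne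
    refine ⟨A0, hA0m, hpA0', fun hsub => ?_⟩
    have : u0 ∈ ({p} : Set G) := hsub ⟨hu0A, hUK hu0U⟩
    exact hpU (this ▸ hu0U)
  obtain ⟨A0, hA0m, hpA0, hA0big⟩ := hA0
  -- the finite graph structure on K
  have hKfg : IsFiniteGraph ↥K := by
    refine ⟨(𝒜.filter (fun A => ¬ (A ∩ K ⊆ {p}))).image
      (fun A => (Subtype.val ⁻¹' A : Set ↥K)), ?_, ?_, ?_⟩
    · rw [Set.eq_univ_iff_forall]
      intro q
      simp only [Set.mem_iUnion, Finset.mem_image, Finset.mem_filter, exists_prop]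
      have : ∃ A ∈ 𝒜, ¬ (A ∩ K ⊆ {p}) ∧ (q : G) ∈ A := by
        rcases q.2 with hqU | hqp
        · obtain ⟨A, hA, hqA⟩ := hmemcov q
          refine ⟨A, hA, fun hsub => ?_, hqA⟩
          have : (q : G) ∈ ({p} : Set G) := hsub ⟨hqA, q.2⟩
          exact hpU (this ▸ hqU)
        · exact ⟨A0, hA0m, hA0big, hqp ▸ hpA0⟩
      obtain ⟨A, hA, hns, hqA⟩ := this
      exact ⟨_, ⟨A, ⟨hA, hns⟩, rfl⟩, hqA⟩
    · intro s hs
      simp only [Finset.mem_image, Finset.mem_filter] at hs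
      obtain ⟨A, ⟨hA, hns⟩, rfl⟩ := hs
      rcases harcs A hA with h | h
      · exact absurd h hns
      · exact ⟨h.some.trans (homeoInter K A).symm⟩
    · intro s hs s' hs' hne
      simp only [Finset.mem_image, Finset.mem_filter] at hs hs'
      obtain ⟨A, ⟨hA, _⟩, rfl⟩ := hs
      obtain ⟨B, ⟨hB, _⟩, rfl⟩ := hs'
      have hAB : A ≠ B := fun h => hne (h ▸ rfl)
      have : (Subtype.val ⁻¹' A : Set ↥K) ∩ (Subtype.val ⁻¹' B) = Subtype.val ⁻¹' (A ∩ B) := rfl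
      rw [this]
      exact (hfin A hA B hB hAB).preimage Subtype.val_injective.injOn
  -- no cut points in K
  have hnocut : ∀ x : ↥K, IsPreconnected ({x}ᶜ : Set ↥K) := by
    intro x
    rw [← Topology.IsInducing.subtypeVal.isPreconnected_image]
    have himg : Subtype.val '' ({x}ᶜ : Set ↥K) = K \ {(x : G)} := by
      ext g
      constructor
      · rintro ⟨y, hy, rfl⟩
        exact ⟨y.2, fun h => hy (Subtype.ext h)⟩
      · rintro ⟨hgK, hgx⟩
        exact ⟨⟨g, hgK⟩, fun h => hgx (congrArg Subtype.val h), rfl⟩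
    rw [himg]
    rcases x.2 with hxU | hxp
    · -- interior cut point candidate: contradiction via uniqueness
      set q : G := (x : G) with hq_def
      by_contra hnc
      have hqp : q ≠ p := fun h => hpU (h ▸ hxU)
      have hpKq : p ∈ K \ {q} := ⟨hpK, fun h => hqp (by simpa using h.symm)⟩
      rw [IsPreconnected] at hnc
      push_neg at hnc
      obtain ⟨u, v, hu, hv, hsub, hne1, hne2, hem⟩ := hnc
      have hem' : ¬ ((K \ {q}) ∩ (u ∩ v)).Nonempty := by
        rw [Set.not_nonempty_iff_eq_empty]
        exact hem
      have main : ∀ u v : Set G, IsOpen u → IsOpen v → (K \ {q}) ⊆ u ∪ v →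
          ((K \ {q}) ∩ u).Nonempty → ((K \ {q}) ∩ v).Nonempty →
          ¬ ((K \ {q}) ∩ (u ∩ v)).Nonempty → p ∈ u →
          ¬ IsPreconnected ({q}ᶜ : Set G) := by
        intro u v hu hv hsub hne1 hne2 hem hpu hpc
        have hpnv : p ∉ v := fun hpv => hem ⟨p, hpKq, hpu, hpv⟩
        have hKmem : ∀ x : G, x ∉ V → x ∈ K := by
          intro x hxV
          by_contra hxK
          exact hxV (hKc_eq ▸ hxK)
        have hcover : ({q}ᶜ : Set G) ⊆ (u ∪ V) ∪ (v ∩ U) := by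
          intro z hz
          by_cases hzV : z ∈ V
          · exact Or.inl (Or.inr hzV)
          · have hzK : z ∈ K \ {q} := ⟨hKmem z hzV, hz⟩
            rcases hsub hzK with h | h
            · exact Or.inl (Or.inl h)
            · have hzp : z ≠ p := fun hc => hpnv (hc ▸ h)
              have hzU : z ∈ U := by
                rcases hzK.1 with h' | h'
                · exact h'
                · exact absurd h' hzp
              exact Or.inr ⟨h, hzU⟩
        have hn1 : (({q}ᶜ : Set G) ∩ (u ∪ V)).Nonempty := by
          obtain ⟨y, hyK, hyu⟩ := hne1
          exact ⟨y, hyK.2, Or.inl hyu⟩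
        have hn2 : (({q}ᶜ : Set G) ∩ (v ∩ U)).Nonempty := by
          obtain ⟨y, hyK, hyv⟩ := hne2
          have hyp : y ≠ p := fun hc => hpnv (hc ▸ hyv)
          have hyU : y ∈ U := by
            rcases hyK.1 with h' | h'
            · exact h'
            · exact absurd h' hyp
          exact ⟨y, hyK.2, hyv, hyU⟩
        obtain ⟨z, hzq, hzl, hzv, hzU⟩ :=
          hpc (u ∪ V) (v ∩ U) (hu.union hVo) (hv.inter hUo) hcover hn1 hn2
        have hzu : z ∈ u := by
          rcases hzl with h | h
          · exact h
          · exact (hdisj.ne_of_mem hzU h rfl).elim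
        exact hem ⟨z, ⟨hUK hzU, hzq⟩, hzu, hzv⟩
      rcases hsub hpKq with hpu | hpv
      · exact hqp (huniq q (main u v hu hv hsub hne1 hne2 hem' hpu))
      · refine hqp (huniq q (main v u hv hu ?_ hne2 hne1 ?_ hpv))
        · rwa [Set.union_comm]
        · rwa [Set.inter_comm v u]
    · -- x = p
      have hxp' : (x : G) = p := hxp
      have : K \ {(x : G)} = U := by
        rw [hxp']
        ext g
        constructor
        · rintro ⟨hgK, hgp⟩
          rcases hgK with h | h
          · exact h
          · exact absurd h hgp
        · intro hgU
          exact ⟨hUK hgU, fun h => hpU (h ▸ hgU)⟩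
      rw [this]
      exact hUc.isPreconnected
  exact ⟨hKcl, hKconn, hKfg, hnocut⟩


/-- If G is a finite graph with exactly one cut-point p and G \ {p} has
exactly two components U and V, then K = U ∪ {p} and M = V ∪ {p} are subcontinua of G
which are tangles; so G is the junction of two tangles. -/
theorem stmt11 {G : Type*} [MetricSpace G] [CompactSpace G] [ConnectedSpace G] [Nontrivial G]
    (hfg : IsFiniteGraph G) (p : G)
    (hcut : ¬ IsPreconnected (({p}ᶜ : Set G)))
    (huniq : ∀ q : G, ¬ IsPreconnected (({q}ᶜ : Set G)) → q = p)
    (U V : Set G) (hUV : U ∪ V = {p}ᶜ) (hdisj : Disjoint U V)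
    (hUo : IsOpen U) (hVo : IsOpen V)
    (hUc : IsConnected U) (hVc : IsConnected V) :
    (IsClosed (U ∪ {p}) ∧ IsConnected (U ∪ {p}) ∧ IsTangle (U ∪ {p} : Set G)) ∧
    (IsClosed (V ∪ {p}) ∧ IsConnected (V ∪ {p}) ∧ IsTangle (V ∪ {p} : Set G)) := by
  refine ⟨tangle_half hfg p huniq U V hUV hdisj hUo hVo hUc hVc,
    tangle_half hfg p huniq V U ?_ hdisj.symm hVo hUo hVc hUc⟩
  rwa [Set.union_comm]
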